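/- For any nonempty subset B of the Hamming cube {0,1}^d, the sum over S ⊆ {1,...,d} of ε^{2|S|} · (Fourier coefficient of the indicator 1_B at S)^2 is at most (|B|/2^d)^{2/(1+ε²)}, for every ε ∈ [0,1]. -/

import Mathlib

open Finset

open Real Set in
lemma tp_aux {p : ℝ} (hp2 : p ≤ 2) {t : ℝ} (ht0 : 0 < t) (ht1 : t < 1) :
    2 ≤ (1+t) ^ (p-2) + (1-t) ^ (p-2) := by
  have h1 : (0:ℝ) < 1 + t := by linarith
  have h2 : (0:ℝ) < 1 - t := by linarith
  have hA : (0:ℝ) < (1+t) ^ (p-2) := rpow_pos_of_pos h1 _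
  have hB : (0:ℝ) < (1-t) ^ (p-2) := rpow_pos_of_pos h2 _
  have hprod : (1+t) ^ (p-2) * (1-t) ^ (p-2) = ((1+t)*(1-t)) ^ (p-2) :=
    (Real.mul_rpow h1.le h2.le).symm
  have hle1 : (1+t)*(1-t) ≤ 1 := by nlinarith
  have hpos : (0:ℝ) < (1+t)*(1-t) := by nlinarith
  have hge1 : (1:ℝ) ≤ ((1+t)*(1-t)) ^ (p-2) :=
    Real.one_le_rpow_of_pos_of_le_one_of_nonpos hpos hle1 (by linarith)
  have hAB : (1:ℝ) ≤ (1+t) ^ (p-2) * (1-t) ^ (p-2) := hprod ▸ hge1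
  nlinarith [sq_nonneg ((1+t)^(p-2) - 1), hAB, hA, hB]

open Real Set in
lemma tp_K {p : ℝ} (hp1 : 1 < p) (hp2 : p ≤ 2) {t : ℝ} (ht0 : 0 ≤ t) (ht1 : t ≤ 1) :
    2 + p*(p-1)*t^2 ≤ (1+t) ^ p + (1-t) ^ p := by
  set ψ : ℝ → ℝ := fun t => p*((1+t)^(p-1) - (1-t)^(p-1)) - 2*p*(p-1)*t with hψ
  set φ : ℝ → ℝ := fun t => (1+t)^p + (1-t)^p - 2 - p*(p-1)*t^2 with hφ
  have h1 : ∀ s : ℝ, HasDerivAt (fun x : ℝ => 1+x) 1 s := fun s => (hasDerivAt_id s).const_add 1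
  have h2 : ∀ s : ℝ, HasDerivAt (fun x : ℝ => 1-x) (-1) s := fun s => (hasDerivAt_id s).const_sub 1
  have contOn : ∀ c : ℝ, 0 ≤ c → ∀ (g : ℝ → ℝ), Continuous g →
      ContinuousOn (fun x => (g x) ^ c) (Set.Icc (0:ℝ) 1) := by
    intro c hc g hg
    exact fun x _ => (ContinuousAt.rpow_const (hg.continuousAt) (Or.inr hc)).continuousWithinAt
  -- derivative of ψ
  have hψd : ∀ s ∈ Set.Ioo (0:ℝ) 1, HasDerivAt ψ
      (p*((p-1)*(1+s)^(p-2) + (p-1)*(1-s)^(p-2)) - 2*p*(p-1)) s := by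
    intro s hs
    have hA : HasDerivAt (fun x : ℝ => (1+x)^(p-1)) (1 * (p-1) * (1+s)^(p-1-1)) s :=
      (h1 s).rpow_const (Or.inl (by nlinarith [hs.1]))
    have hB : HasDerivAt (fun x : ℝ => (1-x)^(p-1)) ((-1) * (p-1) * (1-s)^(p-1-1)) s :=
      (h2 s).rpow_const (Or.inl (by nlinarith [hs.2]))
    rw [show p-1-1 = p-2 by ring] at hA hB
    have := (((hA.sub hB).const_mul p).sub (((hasDerivAt_id s).const_mul (2*p*(p-1)))))
    refine this.congr_deriv ?_
    ring
  have c1 : ContinuousOn (fun x : ℝ => (1+x)^(p-1)) (Set.Icc (0:ℝ) 1) :=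
    contOn _ (by linarith) _ (by continuity)
  have c2 : ContinuousOn (fun x : ℝ => (1-x)^(p-1)) (Set.Icc (0:ℝ) 1) :=
    contOn _ (by linarith) _ (by continuity)
  have c3 : ContinuousOn (fun x : ℝ => (1+x)^p) (Set.Icc (0:ℝ) 1) :=
    contOn _ (by linarith) _ (by continuity)
  have c4 : ContinuousOn (fun x : ℝ => (1-x)^p) (Set.Icc (0:ℝ) 1) :=
    contOn _ (by linarith) _ (by continuity)
  have hψcont : ContinuousOn ψ (Set.Icc (0:ℝ) 1) :=
    (continuousOn_const.mul (c1.sub c2)).sub (by fun_prop)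
  have hψmono : MonotoneOn ψ (Set.Icc (0:ℝ) 1) := by
    apply monotoneOn_of_deriv_nonneg (convex_Icc 0 1) hψcont
    · rw [interior_Icc]
      exact fun x hx => ((hψd x hx).differentiableAt).differentiableWithinAt
    · rw [interior_Icc]
      intro x hx
      rw [(hψd x hx).deriv]
      have h3 := tp_aux hp2 hx.1 hx.2
      nlinarith [mul_nonneg (mul_nonneg (show (0:ℝ) ≤ p by linarith)
        (show (0:ℝ) ≤ p-1 by linarith))
        (show (0:ℝ) ≤ (1+x)^(p-2)+(1-x)^(p-2)-2 by linarith)]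
  have hψ0 : ψ 0 = 0 := by norm_num [hψ]
  have hψnonneg : ∀ s ∈ Set.Icc (0:ℝ) 1, 0 ≤ ψ s := by
    intro s hs
    have := hψmono (left_mem_Icc.2 zero_le_one) hs hs.1
    rwa [hψ0] at this
  -- derivative of φ
  have hφd : ∀ s ∈ Set.Ioo (0:ℝ) 1, HasDerivAt φ (ψ s) s := by
    intro s hs
    have hA : HasDerivAt (fun x : ℝ => (1+x)^p) (1 * p * (1+s)^(p-1)) s :=
      (h1 s).rpow_const (Or.inl (by nlinarith [hs.1]))
    have hB : HasDerivAt (fun x : ℝ => (1-x)^p) ((-1) * p * (1-s)^(p-1)) s :=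
      (h2 s).rpow_const (Or.inl (by nlinarith [hs.2]))
    have hsq : HasDerivAt (fun x : ℝ => p*(p-1)*x^2) (p*(p-1)*(2*s)) s := by
      simpa using ((hasDerivAt_pow 2 s).const_mul (p*(p-1)))
    have := ((hA.add hB).sub_const 2).sub hsq
    refine this.congr_deriv ?_
    simp only [hψ]; ring
  have hφcont : ContinuousOn φ (Set.Icc (0:ℝ) 1) :=
    (((c3.add c4).sub continuousOn_const).sub (by fun_prop))
  have hφmono : MonotoneOn φ (Set.Icc (0:ℝ) 1) := by
    apply monotoneOn_of_deriv_nonneg (convex_Icc 0 1) hφcont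
    · rw [interior_Icc]
      exact fun x hx => ((hφd x hx).differentiableAt).differentiableWithinAt
    · rw [interior_Icc]
      intro x hx
      rw [(hφd x hx).deriv]
      exact hψnonneg x ⟨hx.1.le, hx.2.le⟩
  have hφ0 : φ 0 = 0 := by norm_num [hφ]
  have := hφmono (left_mem_Icc.2 zero_le_one) ⟨ht0, ht1⟩ ht0
  rw [hφ0] at this
  simp only [hφ] at this
  linarith

open Real Set in
lemma tp_core {p : ℝ} (hp1 : 1 < p) (hp2 : p ≤ 2) {t : ℝ} (ht0 : 0 ≤ t) (ht1 : t ≤ 1) :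
    1 + (p-1)*t^2 ≤ (((1+t) ^ p + (1-t) ^ p)/2) ^ (2/p) := by
  have hp0 : (0:ℝ) < p := by linarith
  have hK := tp_K hp1 hp2 ht0 ht1
  have hpt : (0:ℝ) ≤ p*(p-1)*t^2 :=
    mul_nonneg (mul_nonneg hp0.le (by linarith)) (sq_nonneg t)
  have hs0 : (0:ℝ) ≤ (p-1)*t^2 := mul_nonneg (by linarith) (sq_nonneg t)
  have hR1 : (1:ℝ) ≤ ((1+t)^p + (1-t)^p)/2 := by linarith
  have hbern : (1 + (p-1)*t^2) ^ (p/2) ≤ 1 + (p/2)*((p-1)*t^2) :=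
    rpow_one_add_le_one_add_mul_self (by linarith) (by positivity) (by linarith)
  have hle : (1 + (p-1)*t^2) ^ (p/2) ≤ ((1+t)^p + (1-t)^p)/2 := by
    refine hbern.trans ?_; nlinarith
  have hbase : (0:ℝ) ≤ 1 + (p-1)*t^2 := by linarith
  calc 1 + (p-1)*t^2 = ((1 + (p-1)*t^2) ^ (p/2)) ^ (2/p) := by
        rw [← Real.rpow_mul hbase, show (p/2)*(2/p) = 1 by field_simp, Real.rpow_one]
      _ ≤ (((1+t)^p + (1-t)^p)/2) ^ (2/p) :=
        Real.rpow_le_rpow (by positivity) hle (by positivity)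

open Real Set in
lemma tp_nonneg {p : ℝ} (hp1 : 1 < p) (hp2 : p ≤ 2) {a b : ℝ} (hb : 0 ≤ b) (hba : b ≤ a) :
    a^2 + (p-1)*b^2 ≤ (((a+b) ^ p + (a-b) ^ p)/2) ^ (2/p) := by
  have hp0 : (0:ℝ) < p := by linarith
  have ha : 0 ≤ a := hb.trans hba
  rcases eq_or_lt_of_le ha with h | h
  · -- a = 0, so b = 0
    have hb0 : b = 0 := le_antisymm (h ▸ hba) hb
    subst hb0
    rw [← h]
    norm_num [Real.zero_rpow hp0.ne']
    positivity
  · set t := b/a with ht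
    have ht0 : 0 ≤ t := by positivity
    have ht1 : t ≤ 1 := by rw [ht, div_le_one h]; exact hba
    have hab : a+b = a*(1+t) := by rw [ht]; field_simp
    have hab' : a-b = a*(1-t) := by rw [ht]; field_simp
    have key := tp_core hp1 hp2 ht0 ht1
    have expand : (((a+b) ^ p + (a-b) ^ p)/2) ^ (2/p)
        = a^2 * ((((1+t) ^ p + (1-t) ^ p)/2) ^ (2/p)) := by
      rw [hab, hab', Real.mul_rpow h.le (by linarith), Real.mul_rpow h.le (by linarith)]
      rw [show a^p*(1+t)^p + a^p*(1-t)^p = a^p * (((1+t)^p + (1-t)^p)) by ring]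
      have hnn : (0:ℝ) ≤ ((1+t)^p + (1-t)^p)/2 :=
        div_nonneg (add_nonneg (Real.rpow_nonneg (by linarith) _)
          (Real.rpow_nonneg (by linarith) _)) (by norm_num)
      rw [mul_div_assoc, Real.mul_rpow (Real.rpow_nonneg h.le p) hnn]
      congr 1
      rw [← Real.rpow_natCast a 2, ← Real.rpow_mul h.le,
        show p*(2/p) = ((2:ℕ):ℝ) from by push_cast; field_simp]
    rw [expand]
    have : a^2 * (1 + (p-1)*t^2) ≤ a^2 * ((((1+t) ^ p + (1-t) ^ p)/2) ^ (2/p)) :=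
      mul_le_mul_of_nonneg_left key (by positivity)
    refine le_trans (le_of_eq ?_) this
    rw [ht]
    field_simp

open Real Set in
lemma abs_pair (x y : ℝ) (p : ℝ) :
    |x+y| ^ p + |x-y| ^ p = (|x|+|y|) ^ p + |(|x|-|y|)| ^ p := by
  rcases le_total 0 x with hx | hx <;> rcases le_total 0 y with hy | hy
  · have e1 : |x| + |y| = |x+y| := by
      rw [abs_of_nonneg hx, abs_of_nonneg hy, abs_of_nonneg (by linarith : (0:ℝ) ≤ x+y)]
    have e2 : |(|x| - |y|)| = |x - y| := by rw [abs_of_nonneg hx, abs_of_nonneg hy]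
    rw [e1, e2]
  · have e1 : |x| + |y| = |x-y| := by
      rw [abs_of_nonneg hx, abs_of_nonpos hy, abs_of_nonneg (by linarith : (0:ℝ) ≤ x-y)]
      ring
    have e2 : |(|x| - |y|)| = |x + y| := by
      rw [abs_of_nonneg hx, abs_of_nonpos hy, sub_neg_eq_add]
    rw [e1, e2, add_comm]
  · have e1 : |x| + |y| = |x-y| := by
      rw [abs_of_nonpos hx, abs_of_nonneg hy, abs_of_nonpos (by linarith : x-y ≤ (0:ℝ))]
      ring
    have e2 : |(|x| - |y|)| = |x + y| := by
      rw [abs_of_nonpos hx, abs_of_nonneg hy, show -x - y = -(x+y) by ring, abs_neg]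
    rw [e1, e2, add_comm]
  · have e1 : |x| + |y| = |x+y| := by
      rw [abs_of_nonpos hx, abs_of_nonpos hy, abs_of_nonpos (by linarith : x+y ≤ (0:ℝ))]
      ring
    have e2 : |(|x| - |y|)| = |x - y| := by
      rw [abs_of_nonpos hx, abs_of_nonpos hy, show -x - -y = -(x-y) by ring, abs_neg]
    rw [e1, e2]

open Real Set in
lemma two_point {p : ℝ} (hp1 : 1 < p) (hp2 : p ≤ 2) (x y : ℝ) :
    x^2 + (p-1)*y^2 ≤ ((|x+y| ^ p + |x-y| ^ p)/2) ^ (2/p) := by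
  set a := max |x| |y| with ha
  set b := min |x| |y| with hb
  have hb0 : 0 ≤ b := le_min (abs_nonneg x) (abs_nonneg y)
  have hba : b ≤ a := min_le_max
  have e1 : a + b = |x| + |y| := max_add_min _ _
  have e2 : a - b = |(|x| - |y|)| := (max_sub_min_eq_abs _ _).trans (abs_sub_comm _ _)
  have key := tp_nonneg hp1 hp2 hb0 hba
  rw [e1, e2, ← abs_pair x y p] at key
  refine le_trans ?_ key
  rcases le_total |x| |y| with h | h
  · have h1 : a = |y| := max_eq_right h
    have h2 : b = |x| := min_eq_left h
    rw [h1, h2]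
    have hyx : (0:ℝ) ≤ |y|^2 - |x|^2 := by
      nlinarith [mul_nonneg (sub_nonneg.2 h) (add_nonneg (abs_nonneg x) (abs_nonneg y))]
    nlinarith [sq_abs x, sq_abs y, mul_nonneg (show (0:ℝ) ≤ 2-p by linarith) hyx]
  · have h1 : a = |x| := max_eq_left h
    have h2 : b = |y| := min_eq_right h
    rw [h1, h2, sq_abs, sq_abs]

open Real in
lemma revMink {ι : Type*} [Fintype ι] {q : ℝ} (hq0 : 0 < q) (hq1 : q ≤ 1) (X Y : ι → ℝ)
    (hX : ∀ i, 0 ≤ X i) (hY : ∀ i, 0 ≤ Y i) :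
    (∑ i, X i ^ q) ^ (1/q) + (∑ i, Y i ^ q) ^ (1/q) ≤ (∑ i, (X i + Y i) ^ q) ^ (1/q) := by
  set A := ∑ i, X i ^ q with hA
  set B := ∑ i, Y i ^ q with hB
  have hA0 : 0 ≤ A := Finset.sum_nonneg fun i _ => rpow_nonneg (hX i) q
  have hB0 : 0 ≤ B := Finset.sum_nonneg fun i _ => rpow_nonneg (hY i) q
  have hXY : ∀ i, 0 ≤ X i + Y i := fun i => add_nonneg (hX i) (hY i)
  have hZ0 : 0 ≤ ∑ i, (X i + Y i) ^ q := Finset.sum_nonneg fun i _ => rpow_nonneg (hXY i) q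
  have hmonoX : A ≤ ∑ i, (X i + Y i) ^ q :=
    Finset.sum_le_sum fun i _ => rpow_le_rpow (hX i) (by linarith [hY i]) hq0.le
  have hmonoY : B ≤ ∑ i, (X i + Y i) ^ q :=
    Finset.sum_le_sum fun i _ => rpow_le_rpow (hY i) (by linarith [hX i]) hq0.le
  set α := A ^ (1/q) with hα
  set β := B ^ (1/q) with hβ
  have hα0 : 0 ≤ α := rpow_nonneg hA0 _
  have hβ0 : 0 ≤ β := rpow_nonneg hB0 _
  rcases eq_or_lt_of_le hA0 with h | hApos
  · -- A = 0
    rw [hα, ← h, Real.zero_rpow (by positivity : (1:ℝ)/q ≠ 0), zero_add]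
    exact rpow_le_rpow hB0 hmonoY (by positivity)
  rcases eq_or_lt_of_le hB0 with h | hBpos
  · rw [hβ, ← h, Real.zero_rpow (by positivity : (1:ℝ)/q ≠ 0), add_zero]
    exact rpow_le_rpow hA0 hmonoX (by positivity)
  have hαpos : 0 < α := rpow_pos_of_pos hApos _
  have hβpos : 0 < β := rpow_pos_of_pos hBpos _
  have hαβ : 0 < α + β := by linarith
  set lam := α / (α + β) with hlam
  have hlam0 : 0 < lam := by positivity
  have hlam1 : lam < 1 := by rw [hlam, div_lt_one hαβ]; linarith
  have hlam' : 1 - lam = β / (α + β) := by rw [hlam]; field_simp; ring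
  -- α^q = A, β^q = B
  have hαq : α ^ q = A := by
    rw [hα, ← Real.rpow_mul hA0, one_div, inv_mul_cancel₀ hq0.ne', Real.rpow_one]
  have hβq : β ^ q = B := by
    rw [hβ, ← Real.rpow_mul hB0, one_div, inv_mul_cancel₀ hq0.ne', Real.rpow_one]
  -- pointwise concavity bound
  have h1lam : (0:ℝ) < 1 - lam := by linarith
  have hpt : ∀ i, lam ^ (1-q) * X i ^ q + (1-lam) ^ (1-q) * Y i ^ q ≤ (X i + Y i) ^ q := by
    intro i
    have hcc := (Real.concaveOn_rpow hq0.le hq1).2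
      (Set.mem_Ici.2 (div_nonneg (hX i) hlam0.le))
      (Set.mem_Ici.2 (div_nonneg (hY i) h1lam.le))
      hlam0.le h1lam.le (by ring)
    have e1 : lam • (X i / lam) + (1-lam) • (Y i / (1-lam)) = X i + Y i := by
      have : lam ≠ 0 := hlam0.ne'
      have : (1:ℝ) - lam ≠ 0 := by linarith
      simp only [smul_eq_mul]
      field_simp
    rw [e1] at hcc
    have e2 : (X i / lam) ^ q = X i ^ q / lam ^ q := Real.div_rpow (hX i) hlam0.le q
    have e3 : (Y i / (1-lam)) ^ q = Y i ^ q / (1-lam) ^ q :=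
      Real.div_rpow (hY i) h1lam.le q
    simp only [smul_eq_mul] at hcc
    rw [e2, e3] at hcc
    refine le_trans (le_of_eq ?_) hcc
    have e4 : lam ^ (1-q) = lam / lam ^ q := by
      rw [eq_div_iff (rpow_pos_of_pos hlam0 q).ne', ← Real.rpow_add hlam0]
      norm_num
    have e5 : (1-lam) ^ (1-q) = (1-lam) / (1-lam) ^ q := by
      rw [eq_div_iff (rpow_pos_of_pos h1lam q).ne', ← Real.rpow_add h1lam]
      norm_num
    rw [e4, e5]
    ring
  -- sum up
  have hsum : lam ^ (1-q) * A + (1-lam) ^ (1-q) * B ≤ ∑ i, (X i + Y i) ^ q := by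
    rw [hA, hB, Finset.mul_sum, Finset.mul_sum, ← Finset.sum_add_distrib]
    exact Finset.sum_le_sum fun i _ => hpt i
  -- identify LHS with (α+β)^q
  have h1 : α^(1-q) * α^q = α := by
    rw [← Real.rpow_add hαpos]; norm_num
  have h2 : β^(1-q) * β^q = β := by
    rw [← Real.rpow_add hβpos]; norm_num
  have h4 : 0 < (α+β)^(1-q) := rpow_pos_of_pos hαβ _
  have hid : lam ^ (1-q) * A + (1-lam) ^ (1-q) * B = (α + β) ^ q := by
    calc lam ^ (1-q) * A + (1-lam) ^ (1-q) * B
        = (α^(1-q)*α^q + β^(1-q)*β^q)/(α+β)^(1-q) := by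
          rw [hlam', hlam, Real.div_rpow hα0 hαβ.le, Real.div_rpow hβ0 hαβ.le,
            ← hαq, ← hβq]
          ring
      _ = (α+β)/(α+β)^(1-q) := by rw [h1, h2]
      _ = (α+β)^q := by
          rw [div_eq_iff h4.ne', ← Real.rpow_add hαβ]; norm_num
  have hfin : (α+β)^q ≤ ∑ i, (X i + Y i) ^ q := hid ▸ hsum
  have := rpow_le_rpow (rpow_nonneg hαβ.le q) hfin (by positivity : (0:ℝ) ≤ 1/q)
  rwa [← Real.rpow_mul hαβ.le, mul_one_div, div_self hq0.ne', Real.rpow_one] at this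

open Real in
lemma revMink' {ι : Type*} [Fintype ι] {q : ℝ} (hq0 : 0 < q) (hq1 : q ≤ 1) {c : ℝ} (hc : 0 ≤ c) (X Y : ι → ℝ)
    (hX : ∀ i, 0 ≤ X i) (hY : ∀ i, 0 ≤ Y i) :
    (c * ∑ i, X i ^ q) ^ (1/q) + (c * ∑ i, Y i ^ q) ^ (1/q)
      ≤ (c * ∑ i, (X i + Y i) ^ q) ^ (1/q) := by
  set k := c ^ (1/q) with hk
  have hk0 : 0 ≤ k := rpow_nonneg hc _
  have hkq : k ^ q = c := by
    rw [hk, ← Real.rpow_mul hc, one_div, inv_mul_cancel₀ hq0.ne', Real.rpow_one]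
  have e : ∀ (Z : ι → ℝ), (∀ i, 0 ≤ Z i) → ∑ i, (k * Z i) ^ q = c * ∑ i, Z i ^ q := by
    intro Z hZ
    rw [Finset.mul_sum]
    exact Finset.sum_congr rfl fun i _ => by rw [Real.mul_rpow hk0 (hZ i), hkq]
  have key := revMink hq0 hq1 (fun i => k * X i) (fun i => k * Y i)
    (fun i => mul_nonneg hk0 (hX i)) (fun i => mul_nonneg hk0 (hY i))
  simp only [← mul_add] at key
  rwa [e X hX, e Y hY, e (fun i => X i + Y i) (fun i => add_nonneg (hX i) (hY i))] at key

/-- Walsh function `W_S(u) = (-1)^{∑_{j∈S} u_j}` on the Hamming cube `{0,1}^d`. -/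
noncomputable def walsh (d : ℕ) (S : Finset (Fin d)) (u : Fin d → Bool) : ℝ :=
  (-1 : ℝ) ^ (S.filter (fun j => u j)).card

/-- Fourier coefficient `f̂(S) = 2^{-d} ∑_u f(u) W_S(u)`. -/
noncomputable def cubeFourier (d : ℕ) (f : (Fin d → Bool) → ℝ) (S : Finset (Fin d)) : ℝ :=
  (1 / 2 ^ d) * ∑ u : Fin d → Bool, f u * walsh d S u


open Real in
lemma walsh_eq_prod (d : ℕ) (S : Finset (Fin d)) (u : Fin d → Bool) :
    walsh d S u = ∏ j ∈ S, (if u j then (-1:ℝ) else 1) := by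
  rw [Finset.prod_ite, Finset.prod_const, Finset.prod_const, one_pow, mul_one, walsh]

open Real in
lemma sum_prod_subsets (d : ℕ) (w : Fin d → ℝ) :
    ∑ S : Finset (Fin d), ∏ j ∈ S, w j = ∏ j, (1 + w j) := by
  have := Finset.prod_add w (fun _ => (1:ℝ)) (Finset.univ : Finset (Fin d))
  simp only [Finset.prod_const_one, mul_one] at this
  rw [show (fun j => 1 + w j) = fun j => w j + 1 from funext fun j => add_comm 1 (w j), this,
    Finset.powerset_univ]

open Real in
lemma kernel_sum (d : ℕ) (ε : ℝ) (u v : Fin d → Bool) :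
    ∑ S : Finset (Fin d), ε ^ (2 * S.card) * (walsh d S u * walsh d S v)
      = ∏ j, (if u j = v j then 1+ε^2 else 1-ε^2) := by
  have step : ∀ S : Finset (Fin d), ε ^ (2 * S.card) * (walsh d S u * walsh d S v)
      = ∏ j ∈ S, (ε^2 * (if u j = v j then (1:ℝ) else -1)) := by
    intro S
    rw [walsh_eq_prod, walsh_eq_prod, ← Finset.prod_mul_distrib]
    conv_rhs => rw [Finset.prod_mul_distrib, Finset.prod_const]
    rw [pow_mul]
    congr 1
    exact Finset.prod_congr rfl fun j _ => by cases hu : u j <;> cases hv : v j <;> simp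
  rw [Finset.sum_congr rfl fun S _ => step S, sum_prod_subsets]
  exact Finset.prod_congr rfl fun j _ => by by_cases h : u j = v j <;> simp [h] <;> ring

open Real in
lemma fourier_eq_kernel (d : ℕ) (ε : ℝ) (f : (Fin d → Bool) → ℝ) :
    ∑ S : Finset (Fin d), ε ^ (2 * S.card) * (cubeFourier d f S)^2
      = (1/4^d) * ∑ u : Fin d → Bool, ∑ v : Fin d → Bool,
          f u * f v * ∏ j, (if u j = v j then 1+ε^2 else 1-ε^2) := by
  have hc2 : ((1:ℝ)/2^d)^2 = 1/4^d := by
    rw [div_pow, one_pow, ← pow_mul, show ((4:ℝ)) = 2^2 by norm_num, ← pow_mul, mul_comm]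
  calc ∑ S : Finset (Fin d), ε ^ (2 * S.card) * (cubeFourier d f S)^2
      = ∑ S : Finset (Fin d), ∑ u : Fin d → Bool, ∑ v : Fin d → Bool,
          (1/4^d) * (f u * f v * (ε ^ (2*S.card) * (walsh d S u * walsh d S v))) := by
        refine Finset.sum_congr rfl fun S _ => ?_
        rw [cubeFourier, mul_pow, sq (∑ u : Fin d → Bool, f u * walsh d S u),
          Finset.sum_mul_sum]
        simp only [Finset.mul_sum]
        refine Finset.sum_congr rfl fun u _ => Finset.sum_congr rfl fun v _ => ?_
        rw [← hc2]
        ring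
    _ = ∑ u : Fin d → Bool, ∑ v : Fin d → Bool, ∑ S : Finset (Fin d),
          (1/4^d) * (f u * f v * (ε ^ (2*S.card) * (walsh d S u * walsh d S v))) := by
        rw [Finset.sum_comm]
        exact Finset.sum_congr rfl fun u _ => Finset.sum_comm
    _ = (1/4^d) * ∑ u : Fin d → Bool, ∑ v : Fin d → Bool,
          f u * f v * ∏ j, (if u j = v j then 1+ε^2 else 1-ε^2) := by
        rw [Finset.mul_sum]
        refine Finset.sum_congr rfl fun u _ => ?_
        rw [Finset.mul_sum]
        refine Finset.sum_congr rfl fun v _ => ?_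
        rw [← kernel_sum d ε u v, ← Finset.mul_sum, ← Finset.mul_sum]

open Real in
lemma sum_split {d : ℕ} (F : (Fin (d+1) → Bool) → ℝ) :
    ∑ u : Fin (d+1) → Bool, F u
      = ∑ w : Fin d → Bool, (F (Fin.cons false w) + F (Fin.cons true w)) := by
  rw [← Equiv.sum_comp (Fin.consEquiv (fun _ : Fin (d+1) => Bool)) F, Fintype.sum_prod_type]
  rw [Fintype.sum_bool]
  rw [← Finset.sum_add_distrib]
  exact Finset.sum_congr rfl fun w _ => add_comm _ _

open Real in
lemma main_ind (ε : ℝ) (hε0 : 0 < ε) (hε1 : ε ≤ 1) :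
    ∀ (d : ℕ) (f : (Fin d → Bool) → ℝ),
    (1/4^d) * (∑ u : Fin d → Bool, ∑ v : Fin d → Bool,
        f u * f v * ∏ j, (if u j = v j then 1+ε^2 else 1-ε^2))
      ≤ ((1/2^d) * ∑ u : Fin d → Bool, |f u| ^ (1+ε^2 : ℝ)) ^ ((2 : ℝ)/(1+ε^2)) := by
  have hp1 : 1 < 1+ε^2 := by nlinarith
  have hp2 : 1+ε^2 ≤ 2 := by nlinarith
  have hp0 : (0:ℝ) < 1+ε^2 := by linarith
  set p : ℝ := 1+ε^2 with hp
  intro d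
  induction d with
  | zero =>
    intro f
    have hu : (Finset.univ : Finset (Fin 0 → Bool)) = {finZeroElim} :=
      Finset.eq_singleton_iff_unique_mem.mpr
        ⟨Finset.mem_univ _, fun x _ => funext fun i => i.elim0⟩
    rw [hu]
    simp only [Finset.sum_singleton, pow_zero]
    simp only [Finset.univ_eq_empty, Finset.prod_empty, mul_one]
    have key : ((1:ℝ)/1 * |f finZeroElim| ^ p) ^ ((2:ℝ)/p)
        = f finZeroElim * f finZeroElim := by
      rw [one_div_one, one_mul, ← Real.rpow_mul (abs_nonneg _),
        show p * ((2:ℝ)/p) = ((2:ℕ):ℝ) from by field_simp; norm_num, Real.rpow_natCast, sq_abs, sq]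
    rw [key]
    norm_num
  | succ d ih =>
    intro f
    set g : (Fin d → Bool) → ℝ :=
      fun w => (f (Fin.cons false w) + f (Fin.cons true w))/2 with hg
    set h : (Fin d → Bool) → ℝ :=
      fun w => (f (Fin.cons false w) - f (Fin.cons true w))/2 with hh
    have hgf : ∀ w, f (Fin.cons false w) = g w + h w := fun w => by rw [hg, hh]; ring
    have hgt : ∀ w, f (Fin.cons true w) = g w - h w := fun w => by rw [hg, hh]; ring
    set P : (Fin d → Bool) → (Fin d → Bool) → ℝ :=
      fun w w' => ∏ j, (if w j = w' j then 1+ε^2 else 1-ε^2) with hP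
    have prodK : ∀ (a b : Bool) (w w' : Fin d → Bool),
        (∏ j : Fin (d+1), (if (Fin.cons a w : Fin (d+1) → Bool) j
            = (Fin.cons b w' : Fin (d+1) → Bool) j then 1+ε^2 else 1-ε^2))
          = (if a = b then 1+ε^2 else 1-ε^2) * P w w' := by
      intro a b w w'
      rw [Fin.prod_univ_succ]
      simp [hP]
    set F : (Fin (d+1) → Bool) → (Fin (d+1) → Bool) → ℝ :=
      fun u v => f u * f v * ∏ j, (if u j = v j then 1+ε^2 else 1-ε^2) with hF
    have split2 : ∑ u : Fin (d+1) → Bool, ∑ v : Fin (d+1) → Bool, F u v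
        = ∑ w : Fin d → Bool, ∑ w' : Fin d → Bool,
            (F (Fin.cons false w) (Fin.cons false w') + F (Fin.cons false w) (Fin.cons true w')
            + (F (Fin.cons true w) (Fin.cons false w') + F (Fin.cons true w) (Fin.cons true w'))) := by
      rw [sum_split (fun u => ∑ v : Fin (d+1) → Bool, F u v)]
      refine Finset.sum_congr rfl fun w _ => ?_
      rw [sum_split (fun v => F (Fin.cons false w) v), sum_split (fun v => F (Fin.cons true w) v),
        ← Finset.sum_add_distrib]
    have pointwise : ∀ w w' : Fin d → Bool,
        (F (Fin.cons false w) (Fin.cons false w') + F (Fin.cons false w) (Fin.cons true w')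
            + (F (Fin.cons true w) (Fin.cons false w') + F (Fin.cons true w) (Fin.cons true w')))
        = 4 * (g w * g w' * P w w') + 4 * ε^2 * (h w * h w' * P w w') := by
      intro w w'
      simp only [hF, prodK, hgf, hgt]
      norm_num
      ring
    have tensor : (1/4^(d+1)) * (∑ u : Fin (d+1) → Bool, ∑ v : Fin (d+1) → Bool, F u v)
        = (1/4^d) * (∑ w : Fin d → Bool, ∑ w' : Fin d → Bool, g w * g w' * P w w')
          + ε^2 * ((1/4^d) * (∑ w : Fin d → Bool, ∑ w' : Fin d → Bool, h w * h w' * P w w')) := by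
      rw [split2]
      rw [Finset.sum_congr rfl fun w _ => Finset.sum_congr rfl fun w' _ => pointwise w w']
      simp only [Finset.sum_add_distrib, ← Finset.mul_sum]
      rw [pow_succ]
      ring
    -- apply IH
    have ihg := ih g
    have ihh := ih h
    -- rpow bookkeeping
    set q : ℝ := p/2 with hq
    have hq0 : 0 < q := by rw [hq]; linarith
    have hq1 : q ≤ 1 := by rw [hq]; linarith
    have hc : (0:ℝ) ≤ 1/2^d := by positivity
    set X : (Fin d → Bool) → ℝ := fun w => (g w)^2 with hX
    set Y : (Fin d → Bool) → ℝ := fun w => ε^2 * (h w)^2 with hY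
    have hXnn : ∀ w, 0 ≤ X w := fun w => sq_nonneg _
    have hYnn : ∀ w, 0 ≤ Y w := fun w => mul_nonneg (sq_nonneg _) (sq_nonneg _)
    have h2q : ((2:ℕ):ℝ) * q = p := by rw [hq]; push_cast; ring
    have hqp : (1:ℝ)/q = 2/p := by rw [hq]; field_simp
    have claimX : ∀ w, X w ^ q = |g w| ^ p := by
      intro w
      simp only [hX]
      rw [← sq_abs, ← Real.rpow_natCast |g w| 2, ← Real.rpow_mul (abs_nonneg _), h2q]
    have claimY : ∀ w, Y w ^ q = (ε^2) ^ q * |h w| ^ p := by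
      intro w
      simp only [hY]
      rw [Real.mul_rpow (sq_nonneg _) (sq_nonneg _), ← sq_abs (h w),
        ← Real.rpow_natCast |h w| 2, ← Real.rpow_mul (abs_nonneg _), h2q]
    have eX : (1/2^d) * ∑ w, X w ^ q = (1/2^d) * ∑ w : Fin d → Bool, |g w| ^ p := by
      rw [Finset.sum_congr rfl fun w _ => claimX w]
    have eY : (1/2^d) * ∑ w, Y w ^ q = (ε^2) ^ q * ((1/2^d) * ∑ w : Fin d → Bool, |h w| ^ p) := by
      rw [Finset.sum_congr rfl fun w _ => claimY w, ← Finset.mul_sum]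
      ring
    have hsumhnn : (0:ℝ) ≤ (1/2^d) * ∑ w : Fin d → Bool, |h w| ^ p :=
      mul_nonneg hc (Finset.sum_nonneg fun w _ => rpow_nonneg (abs_nonneg _) _)
    have step1 : (1/4^(d+1)) * (∑ u : Fin (d+1) → Bool, ∑ v : Fin (d+1) → Bool, F u v)
        ≤ ((1/2^d) * ∑ w, X w ^ q) ^ ((1:ℝ)/q) + ((1/2^d) * ∑ w, Y w ^ q) ^ ((1:ℝ)/q) := by
      rw [tensor, eX, eY]
      have e2 : ((ε^2) ^ q * ((1/2^d) * ∑ w : Fin d → Bool, |h w| ^ p)) ^ ((1:ℝ)/q)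
          = ε^2 * ((1/2^d) * ∑ w : Fin d → Bool, |h w| ^ p) ^ ((1:ℝ)/q) := by
        rw [Real.mul_rpow (rpow_nonneg (sq_nonneg ε) q) hsumhnn,
          ← Real.rpow_mul (sq_nonneg ε), mul_one_div, div_self hq0.ne', Real.rpow_one]
      rw [e2, hqp]
      exact add_le_add (ih g) (mul_le_mul_of_nonneg_left (ih h) (sq_nonneg ε))
    have step2 : ((1/2^d) * ∑ w, X w ^ q) ^ ((1:ℝ)/q) + ((1/2^d) * ∑ w, Y w ^ q) ^ ((1:ℝ)/q)
        ≤ ((1/2^d) * ∑ w, (X w + Y w) ^ q) ^ ((1:ℝ)/q) :=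
      revMink' hq0 hq1 hc X Y hXnn hYnn
    have ptw : ∀ w, (X w + Y w) ^ q
        ≤ (|f (Fin.cons false w)| ^ p + |f (Fin.cons true w)| ^ p)/2 := by
      intro w
      have tp := two_point hp1 hp2 (g w) (h w)
      rw [show g w + h w = f (Fin.cons false w) from (hgf w).symm,
        show g w - h w = f (Fin.cons true w) from (hgt w).symm] at tp
      have hXYeq : X w + Y w = (g w)^2 + (p-1)*(h w)^2 := by
        simp only [hX, hY, hp]; ring
      have hbase : (0:ℝ) ≤ (|f (Fin.cons false w)| ^ p + |f (Fin.cons true w)| ^ p)/2 := by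
        have := rpow_nonneg (abs_nonneg (f (Fin.cons false w))) p
        have := rpow_nonneg (abs_nonneg (f (Fin.cons true w))) p
        linarith
      calc (X w + Y w) ^ q
          ≤ ((((|f (Fin.cons false w)| ^ p + |f (Fin.cons true w)| ^ p))/2)
              ^ ((2:ℝ)/p)) ^ q := by
            apply rpow_le_rpow (add_nonneg (hXnn w) (hYnn w)) _ hq0.le
            rw [hXYeq]; exact tp
        _ = (|f (Fin.cons false w)| ^ p + |f (Fin.cons true w)| ^ p)/2 := by
            rw [← Real.rpow_mul hbase, show (2:ℝ)/p * q = 1 from by rw [hq]; field_simp,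
              Real.rpow_one]
    have step3 : (1/2^d) * ∑ w, (X w + Y w) ^ q
        ≤ (1/2^(d+1)) * ∑ u : Fin (d+1) → Bool, |f u| ^ p := by
      rw [sum_split (fun u => |f u| ^ p)]
      calc (1/2^d) * ∑ w, (X w + Y w) ^ q
          ≤ (1/2^d) * ∑ w : Fin d → Bool,
              (|f (Fin.cons false w)| ^ p + |f (Fin.cons true w)| ^ p)/2 :=
            mul_le_mul_of_nonneg_left (Finset.sum_le_sum fun w _ => ptw w) hc
        _ = 1/2^(d+1) * ∑ w : Fin d → Bool,
              (|f (Fin.cons false w)| ^ p + |f (Fin.cons true w)| ^ p) := by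
            rw [← Finset.sum_div, pow_succ]
            ring
    have hLnn : (0:ℝ) ≤ (1/2^d) * ∑ w, (X w + Y w) ^ q :=
      mul_nonneg hc (Finset.sum_nonneg fun w _ =>
        rpow_nonneg (add_nonneg (hXnn w) (hYnn w)) q)
    have step4 := rpow_le_rpow hLnn step3 (by positivity : (0:ℝ) ≤ 1/q)
    rw [← hqp]
    exact step1.trans (step2.trans step4)

open Real in
/-- The Bonami–Beckner hypercontractive inequality applied to the indicator of `B`:
`∑_S ε^{2|S|} (1̂_B(S))² ≤ (|B|/2^d)^{2/(1+ε²)}` for `ε ∈ [0,1]`. -/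
theorem bonami_beckner_indicator (d : ℕ) (B : Finset (Fin d → Bool)) (hB : B.Nonempty)
    (ε : ℝ) (hε : ε ∈ Set.Icc (0 : ℝ) 1) :
    ∑ S : Finset (Fin d),
        ε ^ (2 * S.card) * (cubeFourier d (fun u => if u ∈ B then 1 else 0) S) ^ 2
      ≤ ((B.card : ℝ) / 2 ^ d) ^ ((2 : ℝ) / (1 + ε ^ 2)) := by
  obtain ⟨hε0, hε1⟩ := hε
  have hBcast : ∑ u : Fin d → Bool, (if u ∈ B then (1:ℝ) else 0) = B.card := by
    rw [Finset.sum_boole]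
    congr 1
    simp
  rcases eq_or_lt_of_le hε0 with h0 | hεpos
  · -- ε = 0
    have hLHS : ∑ S : Finset (Fin d),
        ε ^ (2 * S.card) * (cubeFourier d (fun u => if u ∈ B then 1 else 0) S) ^ 2
        = ((B.card : ℝ)/2^d) ^ 2 := by
      rw [Finset.sum_eq_single (∅ : Finset (Fin d))]
      · have hw : ∀ u : Fin d → Bool, walsh d ∅ u = 1 := by
          intro u; simp [walsh]
        have : cubeFourier d (fun u => if u ∈ B then 1 else 0) ∅ = (B.card : ℝ)/2^d := by
          rw [cubeFourier]
          simp only [hw, mul_one]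
          rw [hBcast]
          ring
        rw [this]
        norm_num
      · intro S _ hS
        rw [← h0, zero_pow (by
          have : S.card ≠ 0 := fun hc => hS (Finset.card_eq_zero.mp hc)
          omega), zero_mul]
      · intro habs
        exact absurd (Finset.mem_univ _) habs
    rw [hLHS, ← h0]
    norm_num
  · -- ε > 0
    rw [fourier_eq_kernel]
    refine (main_ind ε hεpos hε1 d _).trans (le_of_eq ?_)
    congr 1
    have : ∀ u : Fin d → Bool, |if u ∈ B then (1:ℝ) else 0| ^ (1+ε^2 : ℝ)
        = (if u ∈ B then (1:ℝ) else 0) := by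
      intro u
      by_cases h : u ∈ B <;> simp [h]
      exact Real.zero_rpow (by positivity)
    rw [Finset.sum_congr rfl fun u _ => this u, hBcast]
    ring
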